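/- Let n ≥ 3, 0 < |x| ≤ 1, z ∈ ℝⁿ with |z| < 1, x ≠ z, and set x* = x/|x|. Define K₀(x,z) = |x-z|^{2-n} - |x* - |x|z|^{2-n} - ((n-2)/2)·(1-|z|²)(1-|x|²|z|²)/|x* - |x|z|ⁿ. Then K₀(x,z) ≥ -g(x,z)|x* - |x|z|^{2-n}, where g(x,z) = 2(n-2)·(x*·(x*-z))·(x*·(x* - |x|z))/|x* - |x|z|² ≥ 0. -/
import Mathlib
set_option maxHeartbeats 800000

open scoped RealInnerProductSpace

lemma stmt_17_aux (nR r t s d D : ℝ) (k : ℕ)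
    (hn2 : 3 ≤ nR) (hr0 : 0 < r) (hr1 : r ≤ 1) (hs0 : 0 ≤ s) (hs1 : s < 1)
    (ht1 : t ≤ s) (ht2 : -s ≤ t)
    (hd2 : d ^ 2 = r ^ 2 - 2 * (r * t) + s ^ 2)
    (hD2 : D ^ 2 = 1 - 2 * (r * t) + r ^ 2 * s ^ 2)
    (hd0 : 0 < d) (hD0 : 0 ≤ D) :
    (d ^ k)⁻¹ - (D ^ k)⁻¹ -
        (nR - 2) / 2 * ((1 - s ^ 2) * (1 - r ^ 2 * s ^ 2)) / (D ^ 2 * D ^ k) ≥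
      -(2 * (nR - 2) * (1 - t) * (1 - r * t) / D ^ 2) * (D ^ k)⁻¹ := by
  have hr2 : (0:ℝ) ≤ 1 - r ^ 2 := by nlinarith
  have hs2 : (0:ℝ) ≤ 1 - s ^ 2 := by nlinarith
  have hc2 : (0:ℝ) ≤ 1 - r ^ 2 * s ^ 2 := by nlinarith [mul_nonneg (sq_nonneg r) hs2]
  have hdD2 : d ^ 2 ≤ D ^ 2 := by nlinarith [mul_nonneg hr2 hs2]
  have hD2pos : 0 < D ^ 2 := lt_of_lt_of_le (pow_pos hd0 2) hdD2
  have hDpos : 0 < D := by nlinarith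
  have hdD : d ≤ D := by nlinarith
  have hApos : 0 < 1 - t := by nlinarith
  have hrt : r * t ≤ s := by nlinarith [mul_le_mul_of_nonneg_left ht1 hr0.le]
  have hBpos : 0 < 1 - r * t := by linarith
  have hdk : 0 < d ^ k := pow_pos hd0 k
  have hDk : 0 < D ^ k := pow_pos hDpos k
  have h1 : (D ^ k)⁻¹ ≤ (d ^ k)⁻¹ :=
    inv_anti₀ hdk (pow_le_pow_left₀ hd0.le hdD k)
  have h2A : 1 - s ^ 2 ≤ 2 * (1 - t) := by nlinarith [sq_nonneg (1 - s)]
  have h2B : 1 - r ^ 2 * s ^ 2 ≤ 2 * (1 - r * t) := by nlinarith [sq_nonneg D]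
  have h4 : (1 - s ^ 2) * (1 - r ^ 2 * s ^ 2) ≤ 4 * ((1 - t) * (1 - r * t)) := by
    calc (1 - s ^ 2) * (1 - r ^ 2 * s ^ 2) ≤ (2 * (1 - t)) * (2 * (1 - r * t)) :=
          mul_le_mul h2A h2B hc2 (by linarith)
      _ = 4 * ((1 - t) * (1 - r * t)) := by ring
  have h2 : (nR - 2) / 2 * ((1 - s ^ 2) * (1 - r ^ 2 * s ^ 2)) ≤
      2 * (nR - 2) * (1 - t) * (1 - r * t) := by
    have h5 := mul_le_mul_of_nonneg_left h4 (by linarith : (0:ℝ) ≤ (nR - 2) / 2)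
    linarith
  have hrhs : 2 * (nR - 2) * (1 - t) * (1 - r * t) / D ^ 2 * (D ^ k)⁻¹ =
      2 * (nR - 2) * (1 - t) * (1 - r * t) / (D ^ 2 * D ^ k) := by
    field_simp
  rw [ge_iff_le, neg_mul, neg_le, hrhs]
  have hDn2 : (0:ℝ) < D ^ 2 * D ^ k := by positivity
  have h3 := (div_le_div_iff_of_pos_right hDn2).mpr h2
  linarith

theorem stmt_17 (n : ℕ) (hn : 3 ≤ n) (x z : EuclideanSpace ℝ (Fin n))
    (hx0 : 0 < ‖x‖) (hx1 : ‖x‖ ≤ 1) (hz : ‖z‖ < 1) (hxz : x ≠ z) :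
    0 ≤ 2 * ((n : ℝ) - 2) *
          ⟪‖x‖⁻¹ • x, ‖x‖⁻¹ • x - z⟫ * ⟪‖x‖⁻¹ • x, ‖x‖⁻¹ • x - ‖x‖ • z⟫ /
            ‖‖x‖⁻¹ • x - ‖x‖ • z‖ ^ 2 ∧
      ‖x - z‖ ^ (2 - (n : ℤ)) - ‖‖x‖⁻¹ • x - ‖x‖ • z‖ ^ (2 - (n : ℤ)) -
          ((n : ℝ) - 2) / 2 * ((1 - ‖z‖ ^ 2) * (1 - ‖x‖ ^ 2 * ‖z‖ ^ 2)) /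
            ‖‖x‖⁻¹ • x - ‖x‖ • z‖ ^ (n : ℤ) ≥
        -(2 * ((n : ℝ) - 2) *
            ⟪‖x‖⁻¹ • x, ‖x‖⁻¹ • x - z⟫ * ⟪‖x‖⁻¹ • x, ‖x‖⁻¹ • x - ‖x‖ • z⟫ /
              ‖‖x‖⁻¹ • x - ‖x‖ • z‖ ^ 2) *
          ‖‖x‖⁻¹ • x - ‖x‖ • z‖ ^ (2 - (n : ℤ)) := by
  have hn2 : (3 : ℝ) ≤ n := by exact_mod_cast hn
  set u : EuclideanSpace ℝ (Fin n) := ‖x‖⁻¹ • x with hu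
  set r := ‖x‖ with hr
  have hru : ‖u‖ = 1 := by
    rw [hu, norm_smul, Real.norm_eq_abs, abs_of_pos (inv_pos.mpr hx0)]
    exact inv_mul_cancel₀ hx0.ne'
  set t := ⟪u, z⟫ with ht
  have huu : ⟪u, u⟫ = 1 := by
    rw [real_inner_self_eq_norm_sq, hru]; norm_num
  have hxu : x = r • u := by rw [hu, smul_smul, mul_inv_cancel₀ hx0.ne', one_smul]
  have hA : ⟪u, u - z⟫ = 1 - t := by rw [inner_sub_right, huu]
  have hB : ⟪u, u - r • z⟫ = 1 - r * t := by
    rw [inner_sub_right, huu, real_inner_smul_right]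
  have htabs : |t| ≤ ‖z‖ := by
    have := abs_real_inner_le_norm u z
    rwa [hru, one_mul] at this
  have hD2 : ‖u - r • z‖ ^ 2 = 1 - 2 * (r * t) + r ^ 2 * ‖z‖ ^ 2 := by
    rw [norm_sub_sq_real, hru, real_inner_smul_right, norm_smul, Real.norm_eq_abs,
      abs_of_pos hx0]
    ring
  have hd2 : ‖x - z‖ ^ 2 = r ^ 2 - 2 * (r * t) + ‖z‖ ^ 2 := by
    rw [norm_sub_sq_real, hxu, real_inner_smul_left, norm_smul, Real.norm_eq_abs,
      abs_of_pos hx0, hru]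
    ring
  set d := ‖x - z‖ with hd
  set D := ‖u - r • z‖ with hDdef
  have hdpos : 0 < d := by
    rw [hd, norm_pos_iff]
    exact sub_ne_zero_of_ne hxz
  have hmain := stmt_17_aux ((n : ℝ)) r t ‖z‖ d D (n - 2) hn2 hx0 hx1 (norm_nonneg z) hz
    (abs_le.mp htabs).2 (abs_le.mp htabs).1 hd2 hD2 hdpos (norm_nonneg _)
  have hDpos : 0 < D := by
    have hr2 : (0:ℝ) ≤ 1 - r ^ 2 := by nlinarith
    have hs2 : (0:ℝ) ≤ 1 - ‖z‖ ^ 2 := by nlinarith [norm_nonneg z]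
    have hdD2 : d ^ 2 ≤ D ^ 2 := by nlinarith [mul_nonneg hr2 hs2]
    nlinarith [norm_nonneg (u - r • z), pow_pos hdpos 2]
  constructor
  · rw [hA, hB]
    apply div_nonneg _ (sq_nonneg D)
    have h1 : (0:ℝ) ≤ (n:ℝ) - 2 := by linarith
    have h2 : 0 < 1 - t := by nlinarith [(abs_le.mp htabs).2]
    have h3 : 0 < 1 - r * t := by
      nlinarith [(abs_le.mp htabs).2, mul_le_mul_of_nonneg_left (abs_le.mp htabs).2 hx0.le]
    positivity
  · rw [hA, hB]
    have hkn : (2 - (n : ℤ)) = -((n - 2 : ℕ) : ℤ) := by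
      have : ((n - 2 : ℕ) : ℤ) = (n : ℤ) - 2 := by
        push_cast [Nat.cast_sub (by omega : 2 ≤ n)]; ring
      omega
    have hDn : D ^ (n : ℤ) = D ^ 2 * D ^ (n - 2) := by
      rw [zpow_natCast, ← pow_add]
      congr 1
      omega
    rw [hkn, zpow_neg, zpow_neg, zpow_natCast, zpow_natCast, hDn]
    exact hmain
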